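/- arXiv:2001.01189 — 2 statements merged into one kernel-verified Lean document; each statement's English description precedes it below -/
import Mathlib

section
/- The prescribed bracket on g(γ,Q) is well defined: the bilinear extension of the bracket [L_m,L_n]=σ(m,n)(γ|n−m)L_{m+n} for m,n∈R, [L_m,L_s]=σ(m,s)(γ|s)L_{m+s} for m∈R, s∈ℤ^d∖R, and [L_r,L_s]=(σ(r,s)−σ(s,r))L_{r+s} for r,s∈ℤ^d∖R is antisymmetric and satisfies the Jacobi identity, so it makes g(γ,Q) a complex Lie algebra. -/
open scoped BigOperators

namespace QTorus

/-- σ(m,n) = ∏_{i<j} q_{ji}^{m_j n_i}. -/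
noncomputable def qsigma (d : ℕ) (Q : Matrix (Fin d) (Fin d) ℂ) (m n : Fin d → ℤ) : ℂ :=
  ∏ i : Fin d, ∏ j : Fin d, if i < j then Q j i ^ (m j * n i) else 1

/-- The radical subgroup R = {m | σ(m,n)=σ(n,m) for all n}. -/
def Rset (d : ℕ) (Q : Matrix (Fin d) (Fin d) ℂ) : Set (Fin d → ℤ) :=
  {m | ∀ n : Fin d → ℤ, qsigma d Q m n = qsigma d Q n m}

/-- (γ|m) = ∑ γ_i m_i. -/
noncomputable def ip (d : ℕ) (γ : Fin d → ℂ) (m : Fin d → ℤ) : ℂ :=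
  ∑ i : Fin d, γ i * (m i : ℂ)

/-- The underlying vector space of g(γ,Q): formal ℂ-linear combinations of basis
vectors indexed by ℤ^d. -/
abbrev g (d : ℕ) := (Fin d → ℤ) →₀ ℂ

/-- The basis vector L_m. -/
noncomputable def L (d : ℕ) (m : Fin d → ℤ) : g d := Finsupp.single m 1

/-- Hypotheses on the matrix Q: nonzero entries, q_{ii}=1, q_{ij}q_{ji}=1. -/
def QOk (d : ℕ) (Q : Matrix (Fin d) (Fin d) ℂ) : Prop :=
  (∀ i, Q i i = 1) ∧ (∀ i j, Q i j * Q j i = 1) ∧ (∀ i j, Q i j ≠ 0)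

/-- γ is generic: γ_1,…,γ_d are linearly independent over ℚ. -/
def Generic (d : ℕ) (γ : Fin d → ℂ) : Prop := LinearIndependent ℚ γ

open Classical in
/-- Structure constants of g(γ,Q): [L_m, L_n] = sc(m,n) • L_{m+n}. -/
noncomputable def sc (d : ℕ) (Q : Matrix (Fin d) (Fin d) ℂ) (γ : Fin d → ℂ)
    (m n : Fin d → ℤ) : ℂ :=
  if m ∈ Rset d Q then
    (if n ∈ Rset d Q then qsigma d Q m n * ip d γ (n - m)
     else qsigma d Q m n * ip d γ n)
  else
    (if n ∈ Rset d Q then -(qsigma d Q n m * ip d γ m)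
     else qsigma d Q m n - qsigma d Q n m)

/-- The bracket of g(γ,Q), as the bilinear extension of
[L_m, L_n] = sc(m,n) • L_{m+n}. -/
noncomputable def br (d : ℕ) (Q : Matrix (Fin d) (Fin d) ℂ) (γ : Fin d → ℂ)
    (x y : g d) : g d :=
  x.sum fun m a => y.sum fun n b => Finsupp.single (m + n) (a * b * sc d Q γ m n)

/-- A Lie algebra automorphism of g(γ,Q): a linear equivalence preserving the bracket. -/
def IsAut (d : ℕ) (Q : Matrix (Fin d) (Fin d) ℂ) (γ : Fin d → ℂ)
    (θ : g d ≃ₗ[ℂ] g d) : Prop :=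
  ∀ x y : g d, θ (br d Q γ x y) = br d Q γ (θ x) (θ y)

/-- A derivation of g(γ,Q). -/
def IsDer (d : ℕ) (Q : Matrix (Fin d) (Fin d) ℂ) (γ : Fin d → ℂ)
    (D : g d →ₗ[ℂ] g d) : Prop :=
  ∀ x y : g d, D (br d Q γ x y) = br d Q γ (D x) y + br d Q γ x (D y)

open Classical in
/-- δ(n,R) = 1 if n ∈ R, 0 otherwise. -/
noncomputable def deltaR (d : ℕ) (Q : Matrix (Fin d) (Fin d) ℂ) (n : Fin d → ℤ) : ℕ :=
  if n ∈ Rset d Q then 1 else 0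

/-- A 2-cocycle on g(γ,Q). -/
def IsCocycle (d : ℕ) (Q : Matrix (Fin d) (Fin d) ℂ) (γ : Fin d → ℂ)
    (α : g d →ₗ[ℂ] g d →ₗ[ℂ] ℂ) : Prop :=
  (∀ x y : g d, α x y = - α y x) ∧
  (∀ x y z : g d,
    α (br d Q γ x y) z + α (br d Q γ z x) y + α (br d Q γ y z) x = 0)

/-- i ↔ j is one of the exceptional index pairs (2l-1,2l) (1-based) of the rational
normal form. Here indices are 0-based. -/
def OffDiagPair (z : ℕ) (i j : ℕ) : Prop :=
  ∃ l : ℕ, l < z ∧ ((i = 2 * l ∧ j = 2 * l + 1) ∨ (i = 2 * l + 1 ∧ j = 2 * l))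

/-- Q is in rational normal form with parameters z and k_1,…,k_d (0-based indexing:
the paper's pair (2i-1,2i) is the Lean pair (2l, 2l+1) with l = i-1). -/
def IsRNF (d : ℕ) (Q : Matrix (Fin d) (Fin d) ℂ) (z : ℕ) (k : Fin d → ℕ) : Prop :=
  0 < z ∧ 2 * z ≤ d ∧
  (∀ i j : Fin d, ¬ OffDiagPair z i.val j.val → Q i j = 1) ∧
  (∀ (l : ℕ) (_ : l < z) (hi : 2 * l < d) (hj : 2 * l + 1 < d),
      IsPrimitiveRoot (Q ⟨2 * l, hi⟩ ⟨2 * l + 1, hj⟩) (k ⟨2 * l, hi⟩) ∧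
      Q ⟨2 * l + 1, hj⟩ ⟨2 * l, hi⟩ = (Q ⟨2 * l, hi⟩ ⟨2 * l + 1, hj⟩)⁻¹ ∧
      k ⟨2 * l + 1, hj⟩ = k ⟨2 * l, hi⟩ ∧
      1 < k ⟨2 * l, hi⟩) ∧
  (∀ (i : ℕ) (_ : i + 1 < 2 * z) (h1 : i < d) (h2 : i + 1 < d),
      k ⟨i + 1, h2⟩ ∣ k ⟨i, h1⟩) ∧
  (∀ i : Fin d, 2 * z ≤ i.val → k i = 1)

/-- The vector k_1 e_1 ∈ ℤ^d. -/
noncomputable def k1e1 (d : ℕ) (k : Fin d → ℕ) (hd : 0 < d) : Fin d → ℤ :=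
  Pi.single ⟨0, hd⟩ (k ⟨0, hd⟩ : ℤ)

/-- A 2-cocycle is normalized if α(L_{m-k₁e₁}, L_{k₁e₁})=0 for m ∈ R, m ≠ 2k₁e₁,
α(L_0, L_{2k₁e₁})=0, α(L_0, L_s)=0 for s ∉ R, and α(L_m,L_n)=0 whenever m+n ≠ 0. -/
def IsNormalized (d : ℕ) (Q : Matrix (Fin d) (Fin d) ℂ) (k : Fin d → ℕ) (hd : 0 < d)
    (α : g d →ₗ[ℂ] g d →ₗ[ℂ] ℂ) : Prop :=
  (∀ m ∈ Rset d Q, m ≠ 2 • k1e1 d k hd →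
      α (L d (m - k1e1 d k hd)) (L d (k1e1 d k hd)) = 0) ∧
  α (L d 0) (L d (2 • k1e1 d k hd)) = 0 ∧
  (∀ s, s ∉ Rset d Q → α (L d 0) (L d s) = 0) ∧
  (∀ m n : Fin d → ℤ, m + n ≠ 0 → α (L d m) (L d n) = 0)

/-- The degree derivation ∂_i, acting by ∂_i(L_m) = m_i L_m. -/
noncomputable def deg (d : ℕ) (i : Fin d) (y : g d) : g d :=
  y.sum fun m a => Finsupp.single m ((m i : ℂ) * a)

open Classical in
/-- The 2-cocycle α₁: α₁(L_m,L_n) = δ_{m+n,0}((m_γ)³-m_γ)/12 for m ∈ R, 0 otherwise,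
where m_γ = (γ|m)/(γ|k₁e₁). -/
noncomputable def alpha1 (d : ℕ) (Q : Matrix (Fin d) (Fin d) ℂ) (γ : Fin d → ℂ)
    (k : Fin d → ℕ) (hd : 0 < d) (x y : g d) : ℂ :=
  x.sum fun m a => y.sum fun n b => a * b *
    (if m ∈ Rset d Q ∧ m + n = 0 then
       ((ip d γ m / ip d γ (k1e1 d k hd)) ^ 3 - ip d γ m / ip d γ (k1e1 d k hd)) / 12
     else 0)

open Classical in
/-- The 2-cocycle α₂: α₂(L_r,L_s) = δ_{r+s,0} σ(r,-r)(γ|r)/(γ|k₁e₁) for r ∉ R,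
0 otherwise. -/
noncomputable def alpha2 (d : ℕ) (Q : Matrix (Fin d) (Fin d) ℂ) (γ : Fin d → ℂ)
    (k : Fin d → ℕ) (hd : 0 < d) (x y : g d) : ℂ :=
  x.sum fun m a => y.sum fun n b => a * b *
    (if m ∉ Rset d Q ∧ m + n = 0 then
       qsigma d Q m (-m) * (ip d γ m / ip d γ (k1e1 d k hd))
     else 0)

end QTorus

open QTorus

namespace QTorus

section Aux

variable {d : ℕ} {Q : Matrix (Fin d) (Fin d) ℂ} {γ : Fin d → ℂ}

lemma qsigma_ne_zero (hQ : ∀ i j, Q i j ≠ 0) (m n : Fin d → ℤ) :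
    qsigma d Q m n ≠ 0 := by
  unfold qsigma
  refine Finset.prod_ne_zero_iff.mpr fun i _ => Finset.prod_ne_zero_iff.mpr fun j _ => ?_
  split_ifs
  · exact zpow_ne_zero _ (hQ j i)
  · exact one_ne_zero

lemma qsigma_add_left (hQ : ∀ i j, Q i j ≠ 0) (m n p : Fin d → ℤ) :
    qsigma d Q (m + n) p = qsigma d Q m p * qsigma d Q n p := by
  unfold qsigma
  rw [← Finset.prod_mul_distrib]
  refine Finset.prod_congr rfl fun i _ => ?_
  rw [← Finset.prod_mul_distrib]
  refine Finset.prod_congr rfl fun j _ => ?_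
  by_cases h : i < j
  · simp only [h, if_true, Pi.add_apply, add_mul]
    exact zpow_add₀ (hQ j i) _ _
  · simp [h]

lemma qsigma_add_right (hQ : ∀ i j, Q i j ≠ 0) (m n p : Fin d → ℤ) :
    qsigma d Q m (n + p) = qsigma d Q m n * qsigma d Q m p := by
  unfold qsigma
  rw [← Finset.prod_mul_distrib]
  refine Finset.prod_congr rfl fun i _ => ?_
  rw [← Finset.prod_mul_distrib]
  refine Finset.prod_congr rfl fun j _ => ?_
  by_cases h : i < j
  · simp only [h, if_true, Pi.add_apply, mul_add]
    exact zpow_add₀ (hQ j i) _ _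
  · simp [h]

lemma qsigma_zero_left (m : Fin d → ℤ) : qsigma d Q 0 m = 1 := by
  simp [qsigma]

lemma qsigma_zero_right (m : Fin d → ℤ) : qsigma d Q m 0 = 1 := by
  simp [qsigma]

lemma qsigma_neg_left (hQ : ∀ i j, Q i j ≠ 0) (m n : Fin d → ℤ) :
    qsigma d Q (-m) n = (qsigma d Q m n)⁻¹ := by
  refine eq_inv_of_mul_eq_one_left ?_
  rw [← qsigma_add_left hQ, neg_add_cancel, qsigma_zero_left]

lemma qsigma_neg_right (hQ : ∀ i j, Q i j ≠ 0) (m n : Fin d → ℤ) :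
    qsigma d Q m (-n) = (qsigma d Q m n)⁻¹ := by
  refine eq_inv_of_mul_eq_one_left ?_
  rw [← qsigma_add_right hQ, neg_add_cancel, qsigma_zero_right]

lemma R_add (hQ : ∀ i j, Q i j ≠ 0) {m n : Fin d → ℤ}
    (hm : m ∈ Rset d Q) (hn : n ∈ Rset d Q) : m + n ∈ Rset d Q := by
  intro p
  rw [qsigma_add_left hQ, qsigma_add_right hQ, hm p, hn p]

lemma R_neg (hQ : ∀ i j, Q i j ≠ 0) {m : Fin d → ℤ}
    (hm : m ∈ Rset d Q) : -m ∈ Rset d Q := by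
  intro p
  rw [qsigma_neg_left hQ, qsigma_neg_right hQ, hm p]

lemma R_cancel_left (hQ : ∀ i j, Q i j ≠ 0) {n p : Fin d → ℤ}
    (hn : n ∈ Rset d Q) (h : n + p ∈ Rset d Q) : p ∈ Rset d Q := by
  have h2 := R_add hQ (R_neg hQ hn) h
  have e : -n + (n + p) = p := by abel
  rwa [e] at h2

lemma R_cancel_right (hQ : ∀ i j, Q i j ≠ 0) {m p : Fin d → ℤ}
    (hm : m ∈ Rset d Q) (h : p + m ∈ Rset d Q) : p ∈ Rset d Q := by
  rw [add_comm] at h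
  exact R_cancel_left hQ hm h

lemma qsigma_comm_of_add_mem (hQ : ∀ i j, Q i j ≠ 0) {r s : Fin d → ℤ}
    (h : r + s ∈ Rset d Q) : qsigma d Q r s = qsigma d Q s r := by
  have h1 := h r
  rw [qsigma_add_left hQ, qsigma_add_right hQ] at h1
  exact (mul_left_cancel₀ (qsigma_ne_zero hQ r r) h1).symm

lemma ip_add (m n : Fin d → ℤ) : ip d γ (m + n) = ip d γ m + ip d γ n := by
  simp [ip, mul_add, Finset.sum_add_distrib]

lemma ip_sub (m n : Fin d → ℤ) : ip d γ (m - n) = ip d γ m - ip d γ n := by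
  simp [ip, mul_sub, Finset.sum_sub_distrib]

lemma sc_RR {m n : Fin d → ℤ} (hm : m ∈ Rset d Q) (hn : n ∈ Rset d Q) :
    sc d Q γ m n = qsigma d Q m n * ip d γ (n - m) := by
  unfold sc; rw [if_pos hm, if_pos hn]

lemma sc_RN {m n : Fin d → ℤ} (hm : m ∈ Rset d Q) (hn : n ∉ Rset d Q) :
    sc d Q γ m n = qsigma d Q m n * ip d γ n := by
  unfold sc; rw [if_pos hm, if_neg hn]

lemma sc_NR {m n : Fin d → ℤ} (hm : m ∉ Rset d Q) (hn : n ∈ Rset d Q) :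
    sc d Q γ m n = -(qsigma d Q n m * ip d γ m) := by
  unfold sc; rw [if_neg hm, if_pos hn]

lemma sc_NN {m n : Fin d → ℤ} (hm : m ∉ Rset d Q) (hn : n ∉ Rset d Q) :
    sc d Q γ m n = qsigma d Q m n - qsigma d Q n m := by
  unfold sc; rw [if_neg hm, if_neg hn]

lemma sc_skew (hQ : ∀ i j, Q i j ≠ 0) (m n : Fin d → ℤ) :
    sc d Q γ m n = -sc d Q γ n m := by
  by_cases hm : m ∈ Rset d Q <;> by_cases hn : n ∈ Rset d Q
  · rw [sc_RR hm hn, sc_RR hn hm, hm n, ip_sub, ip_sub]; ring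
  · rw [sc_RN hm hn, sc_NR hn hm]; ring
  · rw [sc_NR hm hn, sc_RN hn hm]
  · rw [sc_NN hm hn, sc_NN hn hm]; ring

end Aux

end QTorus

namespace QTorus

section Jac

variable {d : ℕ} {Q : Matrix (Fin d) (Fin d) ℂ} {γ : Fin d → ℂ}

lemma jacA (hQ : ∀ i j, Q i j ≠ 0) {m n p : Fin d → ℤ}
    (hm : m ∈ Rset d Q) (hn : n ∈ Rset d Q) (hp : p ∈ Rset d Q) :
    sc d Q γ m n * sc d Q γ (m + n) p + sc d Q γ n p * sc d Q γ (n + p) m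
      + sc d Q γ p m * sc d Q γ (p + m) n = 0 := by
  rw [sc_RR hm hn, sc_RR (R_add hQ hm hn) hp, sc_RR hn hp, sc_RR (R_add hQ hn hp) hm,
    sc_RR hp hm, sc_RR (R_add hQ hp hm) hn, qsigma_add_left hQ, qsigma_add_left hQ,
    qsigma_add_left hQ, hn m, hp m, hp n]
  simp only [ip_sub, ip_add]
  ring

lemma jacB (hQ : ∀ i j, Q i j ≠ 0) {m n p : Fin d → ℤ}
    (hm : m ∈ Rset d Q) (hn : n ∈ Rset d Q) (hp : p ∉ Rset d Q) :
    sc d Q γ m n * sc d Q γ (m + n) p + sc d Q γ n p * sc d Q γ (n + p) m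
      + sc d Q γ p m * sc d Q γ (p + m) n = 0 := by
  have hnp : n + p ∉ Rset d Q := fun h => hp (R_cancel_left hQ hn h)
  have hpm : p + m ∉ Rset d Q := fun h => hp (R_cancel_right hQ hm h)
  rw [sc_RR hm hn, sc_RN (R_add hQ hm hn) hp, sc_RN hn hp, sc_NR hnp hm,
    sc_NR hp hm, sc_NR hpm hn, qsigma_add_left hQ, qsigma_add_right hQ,
    qsigma_add_right hQ, hn m]
  simp only [ip_sub, ip_add]
  ring

lemma jacC (hQ : ∀ i j, Q i j ≠ 0) {m n p : Fin d → ℤ}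
    (hm : m ∈ Rset d Q) (hn : n ∉ Rset d Q) (hp : p ∉ Rset d Q) :
    sc d Q γ m n * sc d Q γ (m + n) p + sc d Q γ n p * sc d Q γ (n + p) m
      + sc d Q γ p m * sc d Q γ (p + m) n = 0 := by
  have hmn : m + n ∉ Rset d Q := fun h => hn (R_cancel_left hQ hm h)
  have hpm : p + m ∉ Rset d Q := fun h => hp (R_cancel_right hQ hm h)
  have key : sc d Q γ n p * sc d Q γ (n + p) m
      = (qsigma d Q n p - qsigma d Q p n)
        * (-(qsigma d Q m n * qsigma d Q m p * ip d γ (n + p))) := by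
    by_cases h : n + p ∈ Rset d Q
    · rw [sc_NN hn hp, qsigma_comm_of_add_mem hQ h, sub_self, zero_mul, zero_mul]
    · rw [sc_NN hn hp, sc_NR h hm, qsigma_add_right hQ]
  rw [sc_RN hm hn, sc_NN hmn hp, key, sc_NR hp hm, sc_NN hpm hn,
    qsigma_add_left hQ, qsigma_add_right hQ, qsigma_add_left hQ,
    qsigma_add_right hQ, ← hm p, ← hm n]
  simp only [ip_add]
  ring

lemma jacD (hQ : ∀ i j, Q i j ≠ 0) {m n p : Fin d → ℤ}
    (hm : m ∉ Rset d Q) (hn : n ∉ Rset d Q) (hp : p ∉ Rset d Q) :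
    sc d Q γ m n * sc d Q γ (m + n) p + sc d Q γ n p * sc d Q γ (n + p) m
      + sc d Q γ p m * sc d Q γ (p + m) n = 0 := by
  have key : ∀ r s t : Fin d → ℤ, r ∉ Rset d Q → s ∉ Rset d Q → t ∉ Rset d Q →
      sc d Q γ r s * sc d Q γ (r + s) t
        = (qsigma d Q r s - qsigma d Q s r)
          * (qsigma d Q r t * qsigma d Q s t - qsigma d Q t r * qsigma d Q t s) := by
    intro r s t hr hs ht
    by_cases h : r + s ∈ Rset d Q
    · rw [sc_NN hr hs, qsigma_comm_of_add_mem hQ h, sub_self, zero_mul, zero_mul]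
    · rw [sc_NN hr hs, sc_NN h ht, qsigma_add_left hQ, qsigma_add_right hQ]
  rw [key m n p hm hn hp, key n p m hn hp hm, key p m n hp hm hn]
  ring

lemma jac_cyc (m n p : Fin d → ℤ) :
    sc d Q γ m n * sc d Q γ (m + n) p + sc d Q γ n p * sc d Q γ (n + p) m
      + sc d Q γ p m * sc d Q γ (p + m) n
    = sc d Q γ n p * sc d Q γ (n + p) m + sc d Q γ p m * sc d Q γ (p + m) n
      + sc d Q γ m n * sc d Q γ (m + n) p := by ring

lemma sc_jacobi (hQ : ∀ i j, Q i j ≠ 0) (m n p : Fin d → ℤ) :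
    sc d Q γ m n * sc d Q γ (m + n) p + sc d Q γ n p * sc d Q γ (n + p) m
      + sc d Q γ p m * sc d Q γ (p + m) n = 0 := by
  by_cases hm : m ∈ Rset d Q <;> by_cases hn : n ∈ Rset d Q <;>
    by_cases hp : p ∈ Rset d Q
  · exact jacA hQ hm hn hp
  · exact jacB hQ hm hn hp
  · rw [jac_cyc, jac_cyc]; exact jacB hQ hp hm hn
  · exact jacC hQ hm hn hp
  · rw [jac_cyc]; exact jacB hQ hn hp hm
  · rw [jac_cyc]; exact jacC hQ hn hp hm
  · rw [jac_cyc, jac_cyc]; exact jacC hQ hp hm hn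
  · exact jacD hQ hm hn hp

end Jac

end QTorus

namespace QTorus

noncomputable def Binner (d : ℕ) (Q : Matrix (Fin d) (Fin d) ℂ) (γ : Fin d → ℂ)
    (m : Fin d → ℤ) : g d →ₗ[ℂ] g d :=
  Finsupp.lsum ℂ fun n => LinearMap.toSpanSingleton ℂ (g d) (sc d Q γ m n • L d (m + n))

noncomputable def Bmap (d : ℕ) (Q : Matrix (Fin d) (Fin d) ℂ) (γ : Fin d → ℂ) :
    g d →ₗ[ℂ] g d →ₗ[ℂ] g d :=
  Finsupp.lsum ℂ fun m =>
    LinearMap.toSpanSingleton ℂ (g d →ₗ[ℂ] g d) (Binner d Q γ m)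

section Bprops

variable {d : ℕ} {Q : Matrix (Fin d) (Fin d) ℂ} {γ : Fin d → ℂ}

lemma Bmap_single (m n : Fin d → ℤ) (c e : ℂ) :
    Bmap d Q γ (Finsupp.single m c) (Finsupp.single n e)
      = Finsupp.single (m + n) (c * e * sc d Q γ m n) := by
  unfold Bmap Binner
  rw [Finsupp.lsum_single, LinearMap.toSpanSingleton_apply, LinearMap.smul_apply,
    Finsupp.lsum_single, LinearMap.toSpanSingleton_apply, smul_smul, smul_smul, L,
    Finsupp.smul_single, smul_eq_mul, mul_one, mul_assoc]

lemma Bmap_L (m n : Fin d → ℤ) :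
    Bmap d Q γ (L d m) (L d n) = sc d Q γ m n • L d (m + n) := by
  rw [L, L, Bmap_single, L, Finsupp.smul_single, smul_eq_mul]
  norm_num


lemma Bmap_skew (hQ : ∀ i j, Q i j ≠ 0) (x y : g d) :
    Bmap d Q γ x y = -Bmap d Q γ y x := by
  induction x using Finsupp.induction_linear with
  | zero => simp
  | add a b ha hb =>
    simp only [map_add, LinearMap.add_apply, ha, hb]; abel
  | single m c =>
    induction y using Finsupp.induction_linear with
    | zero => simp
    | add a b ha hb =>
      simp only [map_add, LinearMap.add_apply, ha, hb]; abel
    | single n e =>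
      rw [Bmap_single, Bmap_single, add_comm n m, ← Finsupp.single_neg]
      congr 1
      rw [sc_skew hQ m n]
      ring

lemma Bmap_jacobi (hQ : ∀ i j, Q i j ≠ 0) (x y z : g d) :
    Bmap d Q γ (Bmap d Q γ x y) z + Bmap d Q γ (Bmap d Q γ y z) x
      + Bmap d Q γ (Bmap d Q γ z x) y = 0 := by
  induction x using Finsupp.induction_linear with
  | zero => simp
  | add a b ha hb =>
    simp only [map_add, LinearMap.add_apply]
    calc Bmap d Q γ (Bmap d Q γ a y) z + Bmap d Q γ (Bmap d Q γ b y) z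
          + (Bmap d Q γ (Bmap d Q γ y z) a + Bmap d Q γ (Bmap d Q γ y z) b)
          + (Bmap d Q γ (Bmap d Q γ z a) y + Bmap d Q γ (Bmap d Q γ z b) y)
        = (Bmap d Q γ (Bmap d Q γ a y) z + Bmap d Q γ (Bmap d Q γ y z) a
            + Bmap d Q γ (Bmap d Q γ z a) y)
          + (Bmap d Q γ (Bmap d Q γ b y) z + Bmap d Q γ (Bmap d Q γ y z) b
            + Bmap d Q γ (Bmap d Q γ z b) y) := by abel
      _ = 0 := by rw [ha, hb, add_zero]
  | single m c =>
    induction y using Finsupp.induction_linear with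
    | zero => simp
    | add a b ha hb =>
      simp only [map_add, LinearMap.add_apply]
      calc Bmap d Q γ (Bmap d Q γ (Finsupp.single m c) a) z
            + Bmap d Q γ (Bmap d Q γ (Finsupp.single m c) b) z
            + (Bmap d Q γ (Bmap d Q γ a z) (Finsupp.single m c)
              + Bmap d Q γ (Bmap d Q γ b z) (Finsupp.single m c))
            + (Bmap d Q γ (Bmap d Q γ z (Finsupp.single m c)) a
              + Bmap d Q γ (Bmap d Q γ z (Finsupp.single m c)) b)
          = (Bmap d Q γ (Bmap d Q γ (Finsupp.single m c) a) z
              + Bmap d Q γ (Bmap d Q γ a z) (Finsupp.single m c)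
              + Bmap d Q γ (Bmap d Q γ z (Finsupp.single m c)) a)
            + (Bmap d Q γ (Bmap d Q γ (Finsupp.single m c) b) z
              + Bmap d Q γ (Bmap d Q γ b z) (Finsupp.single m c)
              + Bmap d Q γ (Bmap d Q γ z (Finsupp.single m c)) b) := by abel
        _ = 0 := by rw [ha, hb, add_zero]
    | single n e =>
      induction z using Finsupp.induction_linear with
      | zero => simp
      | add a b ha hb =>
        simp only [map_add, LinearMap.add_apply]
        calc Bmap d Q γ (Bmap d Q γ (Finsupp.single m c) (Finsupp.single n e)) a
              + Bmap d Q γ (Bmap d Q γ (Finsupp.single m c) (Finsupp.single n e)) b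
              + (Bmap d Q γ (Bmap d Q γ (Finsupp.single n e) a) (Finsupp.single m c)
                + Bmap d Q γ (Bmap d Q γ (Finsupp.single n e) b) (Finsupp.single m c))
              + (Bmap d Q γ (Bmap d Q γ a (Finsupp.single m c)) (Finsupp.single n e)
                + Bmap d Q γ (Bmap d Q γ b (Finsupp.single m c)) (Finsupp.single n e))
            = (Bmap d Q γ (Bmap d Q γ (Finsupp.single m c) (Finsupp.single n e)) a
                + Bmap d Q γ (Bmap d Q γ (Finsupp.single n e) a) (Finsupp.single m c)
                + Bmap d Q γ (Bmap d Q γ a (Finsupp.single m c)) (Finsupp.single n e))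
              + (Bmap d Q γ (Bmap d Q γ (Finsupp.single m c) (Finsupp.single n e)) b
                + Bmap d Q γ (Bmap d Q γ (Finsupp.single n e) b) (Finsupp.single m c)
                + Bmap d Q γ (Bmap d Q γ b (Finsupp.single m c)) (Finsupp.single n e)) := by
                abel
          _ = 0 := by rw [ha, hb, add_zero]
      | single p f =>
        rw [Bmap_single, Bmap_single, Bmap_single, Bmap_single, Bmap_single, Bmap_single,
          show n + p + m = m + n + p by abel, show p + m + n = m + n + p by abel,
          ← Finsupp.single_add, ← Finsupp.single_add]
        have h0 : c * e * sc d Q γ m n * f * sc d Q γ (m + n) p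
            + e * f * sc d Q γ n p * c * sc d Q γ (n + p) m
            + f * c * sc d Q γ p m * e * sc d Q γ (p + m) n = 0 := by
          linear_combination (c * e * f) * sc_jacobi (γ := γ) hQ m n p
        rw [h0, Finsupp.single_zero]

end Bprops

end QTorus


/-- The prescribed bracket on g(γ,Q) is well defined: there is a bilinear
map extending [L_m,L_n]=σ(m,n)(γ|n−m)L_{m+n} (m,n∈R), [L_m,L_s]=σ(m,s)(γ|s)L_{m+s}
(m∈R, s∉R), [L_r,L_s]=(σ(r,s)−σ(s,r))L_{r+s} (r,s∉R) which is antisymmetric and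
satisfies the Jacobi identity, so g(γ,Q) is a complex Lie algebra. -/
theorem stmt0 (d : ℕ) (hd : 1 < d) (Q : Matrix (Fin d) (Fin d) ℂ) (hQ : QOk d Q)
    (γ : Fin d → ℂ) (hγ : Generic d γ) :
    ∃ B : g d →ₗ[ℂ] g d →ₗ[ℂ] g d,
      (∀ m n : Fin d → ℤ, m ∈ Rset d Q → n ∈ Rset d Q →
        B (L d m) (L d n) = (qsigma d Q m n * ip d γ (n - m)) • L d (m + n)) ∧
      (∀ m s : Fin d → ℤ, m ∈ Rset d Q → s ∉ Rset d Q →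
        B (L d m) (L d s) = (qsigma d Q m s * ip d γ s) • L d (m + s)) ∧
      (∀ r s : Fin d → ℤ, r ∉ Rset d Q → s ∉ Rset d Q →
        B (L d r) (L d s) = (qsigma d Q r s - qsigma d Q s r) • L d (r + s)) ∧
      (∀ x y : g d, B x y = - B y x) ∧
      (∀ x y z : g d, B (B x y) z + B (B y z) x + B (B z x) y = 0) := by
  obtain ⟨-, -, hQ0⟩ := hQ
  refine ⟨Bmap d Q γ, ?_, ?_, ?_, ?_, ?_⟩
  · intro m n hm hn
    rw [Bmap_L, sc_RR hm hn]
  · intro m s hm hs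
    rw [Bmap_L, sc_RN hm hs]
  · intro r s hr hs
    rw [Bmap_L, sc_NN hr hs]
  · exact Bmap_skew hQ0
  · exact Bmap_jacobi hQ0
end

section
/- Suppose Q is in rational normal form with parameters z and k_1,…,k_d. Then the set R={m∈ℤ^d : σ(m,n)=σ(n,m) for all n∈ℤ^d} equals the subgroup ⊕_{i=1}^d k_iℤe_i of ℤ^d, i.e., m∈R if and only if k_i divides m_i for every 1≤i≤d. -/
open scoped BigOperators

namespace QTorus

lemma qsigma_single_right (d : ℕ) (Q : Matrix (Fin d) (Fin d) ℂ) (m : Fin d → ℤ)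
    (j₀ : Fin d) :
    qsigma d Q m (Pi.single j₀ (1:ℤ)) = ∏ j : Fin d, if j₀ < j then Q j j₀ ^ (m j) else 1 := by
  unfold qsigma
  rw [Finset.prod_eq_single j₀]
  · refine Finset.prod_congr rfl fun j _ => ?_
    rw [Pi.single_eq_same, mul_one]
  · intro i _ hi
    refine Finset.prod_eq_one fun j _ => ?_
    rw [Pi.single_eq_of_ne hi, mul_zero]
    split <;> simp
  · simp

lemma qsigma_single_left (d : ℕ) (Q : Matrix (Fin d) (Fin d) ℂ) (m : Fin d → ℤ)
    (j₀ : Fin d) :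
    qsigma d Q (Pi.single j₀ (1:ℤ)) m = ∏ i : Fin d, if i < j₀ then Q j₀ i ^ (m i) else 1 := by
  unfold qsigma
  refine Finset.prod_congr rfl fun i _ => ?_
  rw [Finset.prod_eq_single j₀]
  · rw [Pi.single_eq_same, one_mul]
  · intro j _ hj
    rw [Pi.single_eq_of_ne hj, zero_mul]
    split <;> simp
  · simp

end QTorus


open QTorus

/-- if Q is in rational normal form with parameters z and k_1,…,k_d,
then R = ⊕ k_iℤe_i, i.e. m ∈ R iff k_i ∣ m_i for all i. -/
theorem stmt11 (d : ℕ) (hd : 1 < d) (Q : Matrix (Fin d) (Fin d) ℂ) (hQ : QOk d Q)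
    (z : ℕ) (k : Fin d → ℕ) (hRNF : IsRNF d Q z k) :
    ∀ m : Fin d → ℤ, m ∈ Rset d Q ↔ ∀ i : Fin d, (k i : ℤ) ∣ m i := by
  obtain ⟨hz, hzd, hQ1, hpairs, hdvd, ktriv⟩ := hRNF
  intro m
  constructor
  · -- forward direction
    intro hm i
    by_cases hi2z : 2 * z ≤ i.val
    · rw [ktriv i hi2z]; exact one_dvd _
    push_neg at hi2z
    -- i.val = 2l or 2l+1 with l < z
    obtain ⟨l, hl, hcase⟩ : ∃ l, l < z ∧ (i.val = 2 * l ∨ i.val = 2 * l + 1) := by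
      refine ⟨i.val / 2, by omega, by omega⟩
    have hA : 2 * l < d := by omega
    have hB : 2 * l + 1 < d := by omega
    obtain ⟨hprim, hinv, hkeq, hk1⟩ := hpairs l hl hA hB
    set a : Fin d := ⟨2 * l, hA⟩
    set b : Fin d := ⟨2 * l + 1, hB⟩
    have hab : a < b := by simp [a, b, Fin.lt_def]
    rcases hcase with hc | hc
    · -- want k a ∣ m a, use n = e_b
      have hi : i = a := Fin.ext hc
      have := hm (Pi.single b 1)
      rw [qsigma_single_right, qsigma_single_left] at this
      have hav : a.val = 2 * l := rfl
      have hbv : b.val = 2 * l + 1 := rfl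
      have hL : (∏ j : Fin d, if b < j then Q j b ^ (m j) else 1) = 1 := by
        refine Finset.prod_eq_one fun j _ => ?_
        split
        · rename_i hbj
          rw [Fin.lt_def] at hbj
          rw [hQ1 j b (by rintro ⟨l', hl', ⟨h1,h2⟩|⟨h1,h2⟩⟩ <;> omega), one_zpow]
        · rfl
      have hR : (∏ i : Fin d, if i < b then Q b i ^ (m i) else 1) = Q b a ^ (m a) := by
        rw [Finset.prod_eq_single a]
        · rw [if_pos hab]
        · intro j _ hj
          split
          · rename_i hjb
            have hjv : j ≠ a → j.val ≠ a.val := fun h h' => h (Fin.ext h')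
            rw [hQ1 b j (by
              rintro ⟨l', hl', ⟨h1,h2⟩|⟨h1,h2⟩⟩
              · omega
              · exact hjv hj (by omega)), one_zpow]
          · rfl
        · intro h; exact absurd (Finset.mem_univ a) h
      rw [hL, hR] at this
      have : Q a b ^ (m a) = 1 := by
        rw [hinv, inv_zpow] at this
        exact inv_eq_one.mp this.symm
      rw [hi]
      exact (hprim.zpow_eq_one_iff_dvd _).mp this
    · -- want k b ∣ m b, use n = e_a
      have hi : i = b := Fin.ext hc
      have := hm (Pi.single a 1)
      rw [qsigma_single_right, qsigma_single_left] at this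
      have hav : a.val = 2 * l := rfl
      have hbv : b.val = 2 * l + 1 := rfl
      have hR : (∏ i : Fin d, if i < a then Q a i ^ (m i) else 1) = 1 := by
        refine Finset.prod_eq_one fun j _ => ?_
        split
        · rename_i hja
          rw [Fin.lt_def] at hja
          rw [hQ1 a j (by rintro ⟨l', hl', ⟨h1,h2⟩|⟨h1,h2⟩⟩ <;> omega), one_zpow]
        · rfl
      have hL : (∏ j : Fin d, if a < j then Q j a ^ (m j) else 1) = Q b a ^ (m b) := by
        rw [Finset.prod_eq_single b]
        · rw [if_pos hab]
        · intro j _ hj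
          split
          · rename_i haj
            have hjv : j ≠ b → j.val ≠ b.val := fun h h' => h (Fin.ext h')
            rw [hQ1 j a (by
              rintro ⟨l', hl', ⟨h1,h2⟩|⟨h1,h2⟩⟩
              · exact hjv hj (by omega)
              · omega), one_zpow]
          · rfl
        · intro h; exact absurd (Finset.mem_univ b) h
      rw [hL, hR] at this
      have hq : Q a b ^ (m b) = 1 := by
        rw [hinv, inv_zpow, inv_eq_one] at this
        exact this
      rw [hi, hkeq]
      exact (hprim.zpow_eq_one_iff_dvd _).mp hq
  · -- backward direction
    intro hm n
    unfold qsigma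
    refine Finset.prod_congr rfl fun i _ => Finset.prod_congr rfl fun j _ => ?_
    split
    · rename_i hij
      by_cases hp : OffDiagPair z j.val i.val
      · obtain ⟨l, hl, hc⟩ := hp
        rcases hc with ⟨h1, h2⟩ | ⟨h1, h2⟩
        · exfalso; rw [Fin.lt_def] at hij; omega
        have hA : 2 * l < d := by omega
        have hB : 2 * l + 1 < d := by omega
        obtain ⟨hprim, hinv, hkeq, hk1⟩ := hpairs l hl hA hB
        have hia : i = ⟨2 * l, hA⟩ := Fin.ext h2
        have hjb : j = ⟨2 * l + 1, hB⟩ := Fin.ext h1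
        have hz1 : Q j i ^ (m j * n i) = 1 := by
          rw [hia, hjb, hinv, inv_zpow, inv_eq_one,
            (hprim.zpow_eq_one_iff_dvd _)]
          exact Dvd.dvd.mul_right (by rw [← hkeq]; exact hm _) _
        have hz2 : Q j i ^ (n j * m i) = 1 := by
          rw [hia, hjb, hinv, inv_zpow, inv_eq_one,
            (hprim.zpow_eq_one_iff_dvd _)]
          exact Dvd.dvd.mul_left (hm _) _
        rw [hz1, hz2]
      · rw [hQ1 j i hp, one_zpow, one_zpow]
    · rfl
end
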